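/- For every ρ ∈ (−1,1) with ρ ≠ 0 and every x ∈ ℝ, sup_{y ∈ ℝ} |G(y)| = |G(y*)|. -/

import Mathlib

open MeasureTheory Real

/-- The standard normal density `φ(u) = (2π)^{-1/2} exp(-u²/2)`. -/
noncomputable def stdNormalPDF (u : ℝ) : ℝ := (Real.sqrt (2 * π))⁻¹ * Real.exp (-u ^ 2 / 2)

/-- The standard normal CDF `Φ(x) = ∫_{-∞}^x φ(u) du`. -/
noncomputable def stdNormalCDF (x : ℝ) : ℝ := ∫ u in Set.Iic x, stdNormalPDF u

/-- `G(y) = Φ(x)Φ(y) − ∫_{−∞}^{y} Φ((x − ρu)/√(1−ρ²)) φ(u) du`. -/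
noncomputable def Gfun (ρ x y : ℝ) : ℝ :=
  stdNormalCDF x * stdNormalCDF y
    - ∫ u in Set.Iic y, stdNormalCDF ((x - ρ * u) / Real.sqrt (1 - ρ ^ 2)) * stdNormalPDF u

/-- `y* = x(1 − √(1−ρ²))/ρ`. -/
noncomputable def ystar (ρ x : ℝ) : ℝ := x * (1 - Real.sqrt (1 - ρ ^ 2)) / ρ

open Filter Set


lemma pdf_pos (u : ℝ) : 0 < stdNormalPDF u := by
  unfold stdNormalPDF
  positivity

lemma pdf_le (u : ℝ) : stdNormalPDF u ≤ (Real.sqrt (2 * π))⁻¹ := by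
  unfold stdNormalPDF
  nlinarith [Real.exp_le_one_iff.2 (by nlinarith [sq_nonneg u] : -u^2/2 ≤ 0), Real.exp_pos (-u^2/2),
    Real.sqrt_pos.2 (by positivity : (0:ℝ) < 2*π), inv_pos.2 (Real.sqrt_pos.2 (by positivity : (0:ℝ) < 2*π))]

lemma pdf_continuous : Continuous stdNormalPDF := by
  unfold stdNormalPDF
  continuity

lemma pdf_integrable : Integrable stdNormalPDF := by
  unfold stdNormalPDF
  apply Integrable.const_mul
  have : ∀ u : ℝ, -u^2/2 = -(1/2 : ℝ) * u^2 := fun u => by ring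
  simp_rw [this]
  exact integrable_exp_neg_mul_sq (by norm_num)

lemma integral_pdf : ∫ u, stdNormalPDF u = 1 := by
  unfold stdNormalPDF
  rw [integral_const_mul]
  have : ∀ u : ℝ, -u^2/2 = -(1/2 : ℝ) * u^2 := fun u => by ring
  simp_rw [this, integral_gaussian]
  rw [show π / (1/2) = 2 * π by ring]
  rw [inv_mul_cancel₀ (by positivity : Real.sqrt (2*π) ≠ 0)]

lemma pdf_integrableOn (s : Set ℝ) : IntegrableOn stdNormalPDF s := pdf_integrable.integrableOn

lemma cdf_nonneg (x : ℝ) : 0 ≤ stdNormalCDF x :=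
  setIntegral_nonneg measurableSet_Iic (fun u _ => (pdf_pos u).le)

lemma cdf_mono : Monotone stdNormalCDF := fun a b hab =>
  setIntegral_mono_set (pdf_integrableOn _) (Eventually.of_forall fun u => (pdf_pos u).le)
    (HasSubset.Subset.eventuallyLE (Iic_subset_Iic.2 hab))

lemma cdf_le_one (x : ℝ) : stdNormalCDF x ≤ 1 := by
  rw [← integral_pdf]
  exact setIntegral_le_integral pdf_integrable (Eventually.of_forall fun u => (pdf_pos u).le)

lemma cdf_eq (x : ℝ) : stdNormalCDF x = stdNormalCDF 0 + ∫ u in (0:ℝ)..x, stdNormalPDF u := by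
  have := intervalIntegral.integral_Iic_sub_Iic (μ := volume) (f := stdNormalPDF)
    (a := 0) (b := x) (pdf_integrableOn _) (pdf_integrableOn _)
  unfold stdNormalCDF
  linarith

lemma cdf_hasDerivAt (x : ℝ) : HasDerivAt stdNormalCDF (stdNormalPDF x) x := by
  have h : ∀ y, stdNormalCDF y = stdNormalCDF 0 + ∫ u in (0:ℝ)..y, stdNormalPDF u := cdf_eq
  rw [funext h]
  exact (intervalIntegral.integral_hasDerivAt_right
    (pdf_integrable.intervalIntegrable)
    (pdf_continuous.stronglyMeasurableAtFilter _ _)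
    pdf_continuous.continuousAt).const_add _

lemma cdf_continuous : Continuous stdNormalCDF := by
  refine continuous_iff_continuousAt.2 fun x => ?_
  exact (cdf_hasDerivAt x).continuousAt

set_option maxHeartbeats 800000 in
lemma cdf_tendsto_atBot : Tendsto stdNormalCDF atBot (nhds 0) := by
  have h : Tendsto (fun a => ∫ u in a..(0:ℝ), stdNormalPDF u) atBot
      (nhds (∫ u in Iic (0:ℝ), stdNormalPDF u)) :=
    intervalIntegral_tendsto_integral_Iic 0 (pdf_integrableOn _) tendsto_id
  have heq : ∀ a : ℝ, stdNormalCDF a = stdNormalCDF 0 - ∫ u in a..(0:ℝ), stdNormalPDF u := by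
    intro a
    rw [cdf_eq a, intervalIntegral.integral_symm]; ring
  have key : Tendsto (fun a => stdNormalCDF 0 - ∫ u in a..(0:ℝ), stdNormalPDF u) atBot
      (nhds (stdNormalCDF 0 - ∫ u in Iic (0:ℝ), stdNormalPDF u)) := tendsto_const_nhds.sub h
  have hz : stdNormalCDF 0 - ∫ u in Iic (0:ℝ), stdNormalPDF u = 0 := by
    unfold stdNormalCDF; ring
  rw [hz] at key
  exact key.congr fun a => (heq a).symm

lemma cdf_tendsto_atTop : Tendsto stdNormalCDF atTop (nhds 1) := by
  have h : Tendsto (fun b => ∫ u in (0:ℝ)..b, stdNormalPDF u) atTop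
      (nhds (∫ u in Ioi (0:ℝ), stdNormalPDF u)) :=
    intervalIntegral_tendsto_integral_Ioi 0 (pdf_integrableOn _) tendsto_id
  have heq : (fun b => stdNormalCDF 0 + ∫ u in (0:ℝ)..b, stdNormalPDF u) = stdNormalCDF := by
    ext b; rw [cdf_eq b]
  have key : Tendsto (fun b => stdNormalCDF 0 + ∫ u in (0:ℝ)..b, stdNormalPDF u) atTop
      (nhds (stdNormalCDF 0 + ∫ u in Ioi (0:ℝ), stdNormalPDF u)) := tendsto_const_nhds.add h
  have hz : stdNormalCDF 0 + ∫ u in Ioi (0:ℝ), stdNormalPDF u = 1 := by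
    unfold stdNormalCDF
    rw [← integral_pdf, ← setIntegral_union (Iic_disjoint_Ioi le_rfl) measurableSet_Ioi
      (pdf_integrableOn _) (pdf_integrableOn _), Iic_union_Ioi, setIntegral_univ]
  rw [hz] at key
  exact key.congr fun b => (cdf_eq b).symm

section Conv
variable {ρ : ℝ}

/-- abbreviation for √(1-ρ²) -/
local notation "s" => Real.sqrt (1 - ρ ^ 2)

lemma s_pos (hρ : ρ ^ 2 < 1) : 0 < s := Real.sqrt_pos.2 (by linarith)

lemma s_sq (hρ : ρ ^ 2 < 1) : s ^ 2 = 1 - ρ ^ 2 := Real.sq_sqrt (by linarith)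

/-- the integrand as a function of x -/
lemma integrand_integrable (x : ℝ) :
    Integrable (fun u => stdNormalCDF ((x - ρ * u) / s) * stdNormalPDF u) := by
  refine Integrable.mono' pdf_integrable ?_ (Eventually.of_forall fun u => ?_)
  · exact ((cdf_continuous.comp (by continuity)).mul pdf_continuous).aestronglyMeasurable
  · rw [Real.norm_eq_abs, abs_of_nonneg (mul_nonneg (cdf_nonneg _) (pdf_pos u).le)]
    nlinarith [cdf_le_one ((x - ρ * u) / s), cdf_nonneg ((x - ρ * u) / s), pdf_pos u]

/-- Gaussian product identity after completing the square. -/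
lemma gauss_prod (hρ : ρ ^ 2 < 1) (x u : ℝ) :
    s⁻¹ * stdNormalPDF ((x - ρ * u) / s) * stdNormalPDF u
      = stdNormalPDF x * ((Real.sqrt (2 * π) * s)⁻¹ * Real.exp (-(u - ρ * x) ^ 2 / (2 * s ^ 2))) := by
  have hs := s_pos hρ
  have hsq := s_sq hρ
  unfold stdNormalPDF
  have hexp : -((x - ρ * u) / s) ^ 2 / 2 + -u ^ 2 / 2
      = -x ^ 2 / 2 + -(u - ρ * x) ^ 2 / (2 * s ^ 2) := by
    have h1 : (1:ℝ) - ρ ^ 2 ≠ 0 := by nlinarith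
    rw [div_pow, hsq]
    field_simp
    ring
  have h2π : (0:ℝ) < Real.sqrt (2 * π) := Real.sqrt_pos.2 (by positivity)
  rw [show s⁻¹ * ((Real.sqrt (2*π))⁻¹ * Real.exp (-((x - ρ * u) / s) ^ 2 / 2))
      * ((Real.sqrt (2*π))⁻¹ * Real.exp (-u ^ 2 / 2))
      = (s⁻¹ * (Real.sqrt (2*π))⁻¹ * (Real.sqrt (2*π))⁻¹)
        * Real.exp (-((x - ρ * u) / s) ^ 2 / 2 + -u ^ 2 / 2) by rw [Real.exp_add]; ring,
    hexp, Real.exp_add]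
  rw [mul_inv (Real.sqrt (2*π)) s]
  ring

lemma integral_gauss_shift (hρ : ρ ^ 2 < 1) (c : ℝ) :
    ∫ u : ℝ, Real.exp (-(u - c) ^ 2 / (2 * s ^ 2)) = Real.sqrt (2 * π) * s := by
  have hs := s_pos hρ
  have h := integral_sub_right_eq_self (μ := volume)
    (fun v => Real.exp (-v ^ 2 / (2 * s ^ 2))) c
  rw [show (fun u : ℝ => Real.exp (-(u - c) ^ 2 / (2 * s ^ 2)))
      = fun u : ℝ => Real.exp (-(u - c) ^ 2 / (2 * s ^ 2)) from rfl]
  calc ∫ u : ℝ, Real.exp (-(u - c) ^ 2 / (2 * s ^ 2))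
      = ∫ v : ℝ, Real.exp (-v ^ 2 / (2 * s ^ 2)) := h
    _ = ∫ v : ℝ, Real.exp (-(1/(2 * s ^ 2)) * v ^ 2) := by
        congr 1; ext v; congr 1; field_simp
    _ = Real.sqrt (π / (1/(2 * s ^ 2))) := integral_gaussian _
    _ = Real.sqrt (2 * π) * s := by
        rw [show π / (1/(2 * s ^ 2)) = (2 * π) * s ^ 2 by field_simp,
          Real.sqrt_mul (by positivity), Real.sqrt_sq hs.le]

/-- The x-derivative integrand integrates to φ(x). -/
lemma integral_deriv_integrand (hρ : ρ ^ 2 < 1) (x : ℝ) :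
    ∫ u : ℝ, s⁻¹ * stdNormalPDF ((x - ρ * u) / s) * stdNormalPDF u = stdNormalPDF x := by
  simp_rw [gauss_prod hρ]
  rw [integral_const_mul, integral_const_mul, integral_gauss_shift hρ]
  rw [inv_mul_cancel₀ (mul_ne_zero (by positivity) (s_pos hρ).ne'), mul_one]

lemma cont_aux (a b c : ℝ) : Continuous (fun u : ℝ => (a - b * u) / c) :=
  (continuous_const.sub (continuous_const.mul continuous_id)).div_const c

lemma cont_aux2 (b c : ℝ) (u : ℝ) : Continuous (fun t : ℝ => (t - b * u) / c) :=
  (continuous_id.sub continuous_const).div_const c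

noncomputable def Ffun (ρ₀ x : ℝ) : ℝ :=
  ∫ u, stdNormalCDF ((x - ρ₀ * u) / Real.sqrt (1 - ρ₀ ^ 2)) * stdNormalPDF u

lemma F_hasDerivAt (hρ : ρ ^ 2 < 1) (x : ℝ) :
    HasDerivAt (Ffun ρ) (stdNormalPDF x) x := by
  have hs := s_pos hρ
  have key := hasDerivAt_integral_of_dominated_loc_of_deriv_le (μ := volume)
    (F := fun x' u => stdNormalCDF ((x' - ρ * u) / s) * stdNormalPDF u)
    (F' := fun x' u => s⁻¹ * stdNormalPDF ((x' - ρ * u) / s) * stdNormalPDF u)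
    (x₀ := x) (bound := fun u => s⁻¹ * (Real.sqrt (2 * π))⁻¹ * stdNormalPDF u)
    (Metric.ball_mem_nhds x one_pos)
    (Eventually.of_forall fun x' =>
      ((cdf_continuous.comp (cont_aux x' ρ _)).mul pdf_continuous).aestronglyMeasurable)
    (integrand_integrable x)
    (((continuous_const.mul (pdf_continuous.comp (cont_aux x ρ _))).mul
      pdf_continuous).aestronglyMeasurable)
    (Eventually.of_forall fun u => fun x' _ => ?_)
    ((pdf_integrable.const_mul _))
    (Eventually.of_forall fun u => fun x' _ => ?_)
  · have h2 := key.2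
    rwa [integral_deriv_integrand hρ x] at h2
  · rw [Real.norm_eq_abs, abs_of_nonneg (mul_nonneg (mul_nonneg (inv_nonneg.2 hs.le)
      (pdf_pos _).le) (pdf_pos _).le)]
    have := pdf_le ((x' - ρ * u) / s)
    have hp := pdf_pos u
    have : s⁻¹ * stdNormalPDF ((x' - ρ * u) / s) ≤ s⁻¹ * (Real.sqrt (2 * π))⁻¹ :=
      mul_le_mul_of_nonneg_left this (by positivity)
    nlinarith [pdf_pos u]
  · have inner : HasDerivAt (fun x' : ℝ => (x' - ρ * u) / s) (1 / s) x' := by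
      simpa using ((hasDerivAt_id x').sub_const (ρ * u)).div_const s
    have h2 := ((cdf_hasDerivAt ((x' - ρ * u) / s)).comp x' inner).mul_const (stdNormalPDF u)
    rw [show stdNormalPDF ((x' - ρ * u) / s) * (1 / s) * stdNormalPDF u
        = s⁻¹ * stdNormalPDF ((x' - ρ * u) / s) * stdNormalPDF u from by ring] at h2
    exact h2

lemma F_tendsto_atBot (hρ : ρ ^ 2 < 1) : Tendsto (Ffun ρ) atBot (nhds 0) := by
  have hs := s_pos hρ
  have h0 : (0:ℝ) = ∫ _ : ℝ, (0:ℝ) := by simp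
  rw [h0]
  refine tendsto_integral_filter_of_dominated_convergence (bound := stdNormalPDF)
    (Eventually.of_forall fun t =>
      ((cdf_continuous.comp (cont_aux t ρ _)).mul pdf_continuous).aestronglyMeasurable)
    (Eventually.of_forall fun t => Eventually.of_forall fun u => ?_)
    pdf_integrable
    (Eventually.of_forall fun u => ?_)
  · rw [Real.norm_eq_abs, abs_of_nonneg (mul_nonneg (cdf_nonneg _) (pdf_pos u).le)]
    nlinarith [cdf_le_one ((t - ρ * u) / s), cdf_nonneg ((t - ρ * u) / s), pdf_pos u]
  · have harg : Tendsto (fun t : ℝ => (t - ρ * u) / s) atBot atBot := by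
      apply Tendsto.atBot_div_const hs
      simpa [sub_eq_add_neg] using tendsto_atBot_add_const_right atBot (-(ρ * u)) tendsto_id
    have := (cdf_tendsto_atBot.comp harg).mul_const (stdNormalPDF u)
    simpa using this

lemma F_eq_cdf (hρ : ρ ^ 2 < 1) (x : ℝ) : Ffun ρ x = stdNormalCDF x := by
  set D := fun t => Ffun ρ t - stdNormalCDF t with hD
  have hderiv : ∀ t, HasDerivAt D 0 t := fun t => by
    have h := (F_hasDerivAt hρ t).sub (cdf_hasDerivAt t)
    rw [sub_self] at h
    exact h
  have hconst : ∀ t, D t = D x := fun t =>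
    is_const_of_deriv_eq_zero (fun y => (hderiv y).differentiableAt)
      (fun y => (hderiv y).deriv) t x
  have hlim : Tendsto D atBot (nhds 0) := by
    have := (F_tendsto_atBot hρ).sub cdf_tendsto_atBot
    simpa using this
  have hlim' : Tendsto D atBot (nhds (D x)) := by
    rw [show D = fun _ => D x from funext hconst]
    exact tendsto_const_nhds
  have hzero : D x = 0 := tendsto_nhds_unique hlim' hlim
  rw [hD] at hzero
  have hx : Ffun ρ x - stdNormalCDF x = 0 := hzero
  linarith

end Conv

section D
variable {ρ x : ℝ}
local notation "s" => Real.sqrt (1 - ρ ^ 2)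

/-- the inner integral -/
noncomputable def Ifun (ρ₀ x y : ℝ) : ℝ :=
  ∫ u in Iic y, stdNormalCDF ((x - ρ₀ * u) / Real.sqrt (1 - ρ₀ ^ 2)) * stdNormalPDF u

lemma I_nonneg (y : ℝ) : 0 ≤ Ifun ρ x y :=
  setIntegral_nonneg measurableSet_Iic fun u _ =>
    mul_nonneg (cdf_nonneg _) (pdf_pos u).le

lemma I_le_cdf (y : ℝ) : Ifun ρ x y ≤ stdNormalCDF y := by
  apply setIntegral_mono_on ((integrand_integrable x).integrableOn)
    (pdf_integrableOn _) measurableSet_Iic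
  intro u _
  nlinarith [cdf_le_one ((x - ρ * u) / s), cdf_nonneg ((x - ρ * u) / s), pdf_pos u]

lemma I_eq (y : ℝ) : Ifun ρ x y = Ifun ρ x 0
    + ∫ u in (0:ℝ)..y, stdNormalCDF ((x - ρ * u) / s) * stdNormalPDF u := by
  have := intervalIntegral.integral_Iic_sub_Iic (μ := volume)
    (f := fun u => stdNormalCDF ((x - ρ * u) / s) * stdNormalPDF u)
    (a := 0) (b := y) ((integrand_integrable x).integrableOn)
    ((integrand_integrable x).integrableOn)
  unfold Ifun
  linarith

lemma I_hasDerivAt (y : ℝ) : HasDerivAt (Ifun ρ x)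
    (stdNormalCDF ((x - ρ * y) / s) * stdNormalPDF y) y := by
  have h : ∀ z, Ifun ρ x z = Ifun ρ x 0
      + ∫ u in (0:ℝ)..z, stdNormalCDF ((x - ρ * u) / s) * stdNormalPDF u := I_eq
  rw [funext h]
  exact (intervalIntegral.integral_hasDerivAt_right
    ((integrand_integrable x).intervalIntegrable)
    (((cdf_continuous.comp (cont_aux x ρ _)).mul
      pdf_continuous).stronglyMeasurableAtFilter _ _)
    ((cdf_continuous.comp (cont_aux x ρ _)).mul pdf_continuous).continuousAt).const_add _

lemma G_eq (y : ℝ) : Gfun ρ x y = stdNormalCDF x * stdNormalCDF y - Ifun ρ x y := rfl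

lemma G_hasDerivAt (y : ℝ) : HasDerivAt (Gfun ρ x)
    (stdNormalPDF y * (stdNormalCDF x - stdNormalCDF ((x - ρ * y) / s))) y := by
  have h1 := ((cdf_hasDerivAt y).const_mul (stdNormalCDF x)).sub (I_hasDerivAt (ρ := ρ) (x := x) y)
  have : stdNormalCDF x * stdNormalPDF y - stdNormalCDF ((x - ρ * y) / s) * stdNormalPDF y
      = stdNormalPDF y * (stdNormalCDF x - stdNormalCDF ((x - ρ * y) / s)) := by ring
  rw [this] at h1
  exact h1

lemma G_tendsto_atBot : Tendsto (Gfun ρ x) atBot (nhds 0) := by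
  have h1 : Tendsto (fun y => stdNormalCDF x * stdNormalCDF y) atBot (nhds 0) := by
    simpa using cdf_tendsto_atBot.const_mul (stdNormalCDF x)
  have h2 : Tendsto (fun y => Ifun ρ x y) atBot (nhds 0) :=
    tendsto_of_tendsto_of_tendsto_of_le_of_le tendsto_const_nhds cdf_tendsto_atBot
      (fun y => I_nonneg y) (fun y => I_le_cdf y)
  show Tendsto (fun y => stdNormalCDF x * stdNormalCDF y - Ifun ρ x y) atBot (nhds 0)
  simpa using h1.sub h2

lemma I_tendsto_atTop (hρ : ρ ^ 2 < 1) :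
    Tendsto (Ifun ρ x) atTop (nhds (stdNormalCDF x)) := by
  have h : Tendsto (fun b => ∫ u in (0:ℝ)..b,
      stdNormalCDF ((x - ρ * u) / s) * stdNormalPDF u) atTop
      (nhds (∫ u in Ioi (0:ℝ), stdNormalCDF ((x - ρ * u) / s) * stdNormalPDF u)) :=
    intervalIntegral_tendsto_integral_Ioi 0 ((integrand_integrable x).integrableOn) tendsto_id
  have key : Tendsto (fun b => Ifun ρ x 0 + ∫ u in (0:ℝ)..b,
      stdNormalCDF ((x - ρ * u) / s) * stdNormalPDF u) atTop
      (nhds (Ifun ρ x 0 + ∫ u in Ioi (0:ℝ),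
        stdNormalCDF ((x - ρ * u) / s) * stdNormalPDF u)) := tendsto_const_nhds.add h
  have hz : Ifun ρ x 0 + (∫ u in Ioi (0:ℝ),
      stdNormalCDF ((x - ρ * u) / s) * stdNormalPDF u) = stdNormalCDF x := by
    rw [← F_eq_cdf hρ x]
    unfold Ifun Ffun
    rw [← setIntegral_union (Iic_disjoint_Ioi le_rfl) measurableSet_Ioi
      ((integrand_integrable x).integrableOn) ((integrand_integrable x).integrableOn),
      Iic_union_Ioi, setIntegral_univ]
  rw [hz] at key
  exact key.congr fun b => (I_eq b).symm

lemma G_tendsto_atTop (hρ : ρ ^ 2 < 1) : Tendsto (Gfun ρ x) atTop (nhds 0) := by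
  have h1 : Tendsto (fun y => stdNormalCDF x * stdNormalCDF y) atTop
      (nhds (stdNormalCDF x)) := by
    simpa using cdf_tendsto_atTop.const_mul (stdNormalCDF x)
  have := h1.sub (I_tendsto_atTop (ρ := ρ) (x := x) hρ)
  show Tendsto (fun y => stdNormalCDF x * stdNormalCDF y - Ifun ρ x y) atTop (nhds 0)
  simpa using this

lemma arg_ystar (hρ : ρ ^ 2 < 1) (hρ0 : ρ ≠ 0) : (x - ρ * ystar ρ x) / s = x := by
  have hs := s_pos hρ
  unfold ystar
  field_simp
  ring

lemma G_continuous : Continuous (Gfun ρ x) :=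
  continuous_iff_continuousAt.2 fun y => (G_hasDerivAt y).continuousAt

section pos

lemma G_anti_pos (hρ : ρ ^ 2 < 1) (hρp : 0 < ρ) : AntitoneOn (Gfun ρ x) (Iic (ystar ρ x)) := by
  have hs := s_pos hρ
  refine antitoneOn_of_deriv_nonpos (convex_Iic _) G_continuous.continuousOn
    (fun y _ => (G_hasDerivAt y).differentiableAt.differentiableWithinAt) fun y hy => ?_
  rw [interior_Iic] at hy
  rw [(G_hasDerivAt y).deriv]
  have hy' : ρ * y < x * (1 - s) := by
    have := (lt_div_iff₀ hρp).1 (show y < x * (1 - s) / ρ from hy)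
    linarith
  have harg : x ≤ (x - ρ * y) / s := by
    rw [le_div_iff₀ hs]
    nlinarith [Real.sq_sqrt (show (0:ℝ) ≤ 1 - ρ ^ 2 by nlinarith),
      Real.sqrt_nonneg (1 - ρ ^ 2)]
  exact mul_nonpos_of_nonneg_of_nonpos (pdf_pos y).le (by linarith [cdf_mono harg])

lemma G_mono_pos (hρ : ρ ^ 2 < 1) (hρp : 0 < ρ) : MonotoneOn (Gfun ρ x) (Ici (ystar ρ x)) := by
  have hs := s_pos hρ
  refine monotoneOn_of_deriv_nonneg (convex_Ici _) G_continuous.continuousOn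
    (fun y _ => (G_hasDerivAt y).differentiableAt.differentiableWithinAt) fun y hy => ?_
  rw [interior_Ici] at hy
  rw [(G_hasDerivAt y).deriv]
  have hy' : x * (1 - s) < ρ * y := by
    have := (div_lt_iff₀ hρp).1 (show x * (1 - s) / ρ < y from hy)
    linarith
  have harg : (x - ρ * y) / s ≤ x := by
    rw [div_le_iff₀ hs]
    nlinarith
  exact mul_nonneg (pdf_pos y).le (by linarith [cdf_mono harg])

lemma G_nonpos (hρ : ρ ^ 2 < 1) (hρp : 0 < ρ) (y : ℝ) : Gfun ρ x y ≤ 0 := by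
  rcases le_total y (ystar ρ x) with h | h
  · refine ge_of_tendsto (G_tendsto_atBot (ρ := ρ) (x := x)) ?_
    rw [eventually_atBot]
    exact ⟨y, fun t ht => G_anti_pos hρ hρp (ht.trans h) h ht⟩
  · refine ge_of_tendsto (G_tendsto_atTop (ρ := ρ) (x := x) hρ) ?_
    rw [eventually_atTop]
    exact ⟨y, fun t ht => G_mono_pos hρ hρp h (h.trans ht) ht⟩

lemma G_ge_star (hρ : ρ ^ 2 < 1) (hρp : 0 < ρ) (y : ℝ) : Gfun ρ x (ystar ρ x) ≤ Gfun ρ x y := by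
  rcases le_total y (ystar ρ x) with h | h
  · exact G_anti_pos hρ hρp h (mem_Iic.2 le_rfl) h
  · exact G_mono_pos hρ hρp (mem_Ici.2 le_rfl) h h

lemma abs_le_pos (hρ : ρ ^ 2 < 1) (hρp : 0 < ρ) (y : ℝ) : |Gfun ρ x y| ≤ |Gfun ρ x (ystar ρ x)| := by
  rw [abs_of_nonpos (G_nonpos hρ hρp y), abs_of_nonpos (G_nonpos hρ hρp _)]
  linarith [G_ge_star hρ hρp (x := x) y]

end pos

section neg

lemma G_mono_neg (hρ : ρ ^ 2 < 1) (hρn : ρ < 0) : MonotoneOn (Gfun ρ x) (Iic (ystar ρ x)) := by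
  have hs := s_pos hρ
  refine monotoneOn_of_deriv_nonneg (convex_Iic _) G_continuous.continuousOn
    (fun y _ => (G_hasDerivAt y).differentiableAt.differentiableWithinAt) fun y hy => ?_
  rw [interior_Iic] at hy
  rw [(G_hasDerivAt y).deriv]
  have hy' : x * (1 - s) < ρ * y := by
    have := (lt_div_iff_of_neg hρn).1 (show y < x * (1 - s) / ρ from hy)
    linarith
  have harg : (x - ρ * y) / s ≤ x := by
    rw [div_le_iff₀ hs]
    nlinarith [Real.sq_sqrt (show (0:ℝ) ≤ 1 - ρ ^ 2 by nlinarith),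
      Real.sqrt_nonneg (1 - ρ ^ 2)]
  exact mul_nonneg (pdf_pos y).le (by linarith [cdf_mono harg])

lemma G_anti_neg (hρ : ρ ^ 2 < 1) (hρn : ρ < 0) : AntitoneOn (Gfun ρ x) (Ici (ystar ρ x)) := by
  have hs := s_pos hρ
  refine antitoneOn_of_deriv_nonpos (convex_Ici _) G_continuous.continuousOn
    (fun y _ => (G_hasDerivAt y).differentiableAt.differentiableWithinAt) fun y hy => ?_
  rw [interior_Ici] at hy
  rw [(G_hasDerivAt y).deriv]
  have hy' : ρ * y < x * (1 - s) := by
    have := (div_lt_iff_of_neg hρn).1 (show x * (1 - s) / ρ < y from hy)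
    linarith
  have harg : x ≤ (x - ρ * y) / s := by
    rw [le_div_iff₀ hs]
    nlinarith [Real.sq_sqrt (show (0:ℝ) ≤ 1 - ρ ^ 2 by nlinarith),
      Real.sqrt_nonneg (1 - ρ ^ 2)]
  exact mul_nonpos_of_nonneg_of_nonpos (pdf_pos y).le (by linarith [cdf_mono harg])

lemma G_nonneg (hρ : ρ ^ 2 < 1) (hρn : ρ < 0) (y : ℝ) : 0 ≤ Gfun ρ x y := by
  rcases le_total y (ystar ρ x) with h | h
  · refine le_of_tendsto (G_tendsto_atBot (ρ := ρ) (x := x)) ?_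
    rw [eventually_atBot]
    exact ⟨y, fun t ht => G_mono_neg hρ hρn (ht.trans h) h ht⟩
  · refine le_of_tendsto (G_tendsto_atTop (ρ := ρ) (x := x) hρ) ?_
    rw [eventually_atTop]
    exact ⟨y, fun t ht => G_anti_neg hρ hρn h (h.trans ht) ht⟩

lemma G_le_star (hρ : ρ ^ 2 < 1) (hρn : ρ < 0) (y : ℝ) : Gfun ρ x y ≤ Gfun ρ x (ystar ρ x) := by
  rcases le_total y (ystar ρ x) with h | h
  · exact G_mono_neg hρ hρn h (mem_Iic.2 le_rfl) h
  · exact G_anti_neg hρ hρn (mem_Ici.2 le_rfl) h h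

lemma abs_le_neg (hρ : ρ ^ 2 < 1) (hρn : ρ < 0) (y : ℝ) : |Gfun ρ x y| ≤ |Gfun ρ x (ystar ρ x)| := by
  rw [abs_of_nonneg (G_nonneg hρ hρn y), abs_of_nonneg (G_nonneg hρ hρn _)]
  exact G_le_star hρ hρn y

end neg
end D

/-- For every `ρ ∈ (−1,1)` with `ρ ≠ 0` and every `x ∈ ℝ`,
`sup_{y ∈ ℝ} |G(y)| = |G(y*)|`. -/
theorem stmt7 (ρ x : ℝ) (hρ : ρ ∈ Set.Ioo (-1 : ℝ) 1) (hρ0 : ρ ≠ 0) :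
    (⨆ y : ℝ, |Gfun ρ x y|) = |Gfun ρ x (ystar ρ x)| := by
  obtain ⟨h1, h2⟩ := hρ
  have hρ2 : ρ ^ 2 < 1 := by nlinarith
  have key : ∀ y, |Gfun ρ x y| ≤ |Gfun ρ x (ystar ρ x)| := by
    rcases hρ0.lt_or_gt with hn | hp
    · exact fun y => abs_le_neg hρ2 hn y
    · exact fun y => abs_le_pos hρ2 hp y
  have bdd : BddAbove (Set.range fun y => |Gfun ρ x y|) :=
    ⟨|Gfun ρ x (ystar ρ x)|, by rintro _ ⟨y, rfl⟩; exact key y⟩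
  exact le_antisymm (ciSup_le key) (le_ciSup bdd (ystar ρ x))
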